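/- Let aᵢ be elements of a C*-algebra A and λᵢ > 0, and let xᵢ = λᵢ^{1/2}ℓᵢ + λᵢ^{-1/2}ℓ′ᵢ* be generalized circular elements on Fock space. Then ‖Σᵢ aᵢ ⊗ xᵢ‖ ≤ ‖Σᵢ λᵢ aᵢ*aᵢ‖^{1/2} + ‖Σᵢ λᵢ^{-1} aᵢaᵢ*‖^{1/2} in the minimal tensor product norm (i.e., as operators on H_A ⊗ F(H) when A ⊆ B(H_A)). -/

import Mathlib

open scoped InnerProductSpace

section aux
open ContinuousLinearMap
variable {HA F L : Type*}
    [NormedAddCommGroup HA] [InnerProductSpace ℂ HA] [CompleteSpace HA]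
    [NormedAddCommGroup F] [InnerProductSpace ℂ F] [CompleteSpace F]
    [NormedAddCommGroup L] [InnerProductSpace ℂ L] [CompleteSpace L]
    (tp : HA →ₗ[ℂ] F →ₗ[ℂ] L)
    (htp : ∀ (ξ ξ' : HA) (η η' : F),
      ⟪tp ξ η, tp ξ' η'⟫_ℂ = ⟪ξ, ξ'⟫_ℂ * ⟪η, η'⟫_ℂ)

set_option maxHeartbeats 1000000
set_option synthInstance.maxHeartbeats 400000
include htp

lemma tp_inner_sum {K K' : Type*} (t : Finset K) (t' : Finset K')
    (u : K → HA) (w : K → F) (u' : K' → HA) (w' : K' → F) :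
    ⟪∑ k ∈ t, tp (u k) (w k), ∑ l ∈ t', tp (u' l) (w' l)⟫_ℂ
      = ∑ k ∈ t, ∑ l ∈ t', ⟪u k, u' l⟫_ℂ * ⟪w k, w' l⟫_ℂ := by
  rw [sum_inner]
  exact Finset.sum_congr rfl fun k _ => by
    rw [inner_sum]
    exact Finset.sum_congr rfl fun l _ => htp _ _ _ _

lemma tp_norm_sq {K : Type*} (t : Finset K) (u : K → HA) (w : K → F) :
    ((‖∑ k ∈ t, tp (u k) (w k)‖ : ℂ)) ^ 2
      = ∑ k ∈ t, ∑ l ∈ t, ⟪u k, u l⟫_ℂ * ⟪w k, w l⟫_ℂ := by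
  have h := inner_self_eq_norm_sq_to_K (𝕜 := ℂ) (∑ k ∈ t, tp (u k) (w k))
  rw [tp_inner_sum tp htp t t u w u w] at h
  exact h.symm

/-- second-slot version: applying `c† ∘ c` in the second factor yields a square norm -/
lemma tp_csq_snd {K : Type*} (t : Finset K) (u : K → HA) (w : K → F)
    (c : F →L[ℂ] F) :
    ∑ k ∈ t, ∑ l ∈ t, ⟪u k, u l⟫_ℂ * ⟪w k, (adjoint c ∘L c) (w l)⟫_ℂ
      = ((‖∑ k ∈ t, tp (u k) (c (w k))‖ : ℂ)) ^ 2 := by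
  rw [tp_norm_sq tp htp]
  refine Finset.sum_congr rfl fun k _ => Finset.sum_congr rfl fun l _ => ?_
  rw [comp_apply, adjoint_inner_right]

lemma tp_csq_fst {K : Type*} (t : Finset K) (u : K → HA) (w : K → F)
    (c : HA →L[ℂ] HA) :
    ∑ k ∈ t, ∑ l ∈ t, ⟪u k, (adjoint c ∘L c) (u l)⟫_ℂ * ⟪w k, w l⟫_ℂ
      = ((‖∑ k ∈ t, tp (c (u k)) (w k)‖ : ℂ)) ^ 2 := by
  rw [tp_norm_sq tp htp]
  refine Finset.sum_congr rfl fun k _ => Finset.sum_congr rfl fun l _ => ?_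
  rw [comp_apply, adjoint_inner_right]

/-- Gram-matrix bound: for `0 ≤ b`,
`Σ_{k,l} ⟪u k, b (u l)⟫⟪w k, w l⟫ ≤ ‖b‖ ‖Σ tp (u k) (w k)‖²`. -/
lemma tp_gram_le {K : Type*} (t : Finset K) (u : K → HA) (w : K → F)
    (b : HA →L[ℂ] HA) (hb : 0 ≤ b) :
    (∑ k ∈ t, ∑ l ∈ t, ⟪u k, b (u l)⟫_ℂ * ⟪w k, w l⟫_ℂ).re
      ≤ ‖b‖ * ‖∑ k ∈ t, tp (u k) (w k)‖ ^ 2 := by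
  have hbsa : IsSelfAdjoint b := .of_nonneg hb
  set d : HA →L[ℂ] HA := algebraMap ℝ (HA →L[ℂ] HA) ‖b‖ - b with hd_def
  have hd : 0 ≤ d := sub_nonneg.2 hbsa.le_algebraMap_norm_self
  set c := CFC.sqrt d with hc_def
  have hcsa : IsSelfAdjoint c := .of_nonneg (CFC.sqrt_nonneg d)
  have hcc : adjoint c ∘L c = d := by
    rw [← star_eq_adjoint, hcsa.star_eq]
    exact CFC.sqrt_mul_sqrt_self d hd
  have happ : ∀ y : HA, b y = (‖b‖ : ℂ) • y - (adjoint c ∘L c) y := by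
    intro y
    rw [hcc, hd_def]
    simp [Algebra.algebraMap_eq_smul_one, Complex.real_smul, sub_sub_cancel]
  have key : ∑ k ∈ t, ∑ l ∈ t, ⟪u k, b (u l)⟫_ℂ * ⟪w k, w l⟫_ℂ
      = ((‖b‖ * ‖∑ k ∈ t, tp (u k) (w k)‖ ^ 2
          - ‖∑ k ∈ t, tp (c (u k)) (w k)‖ ^ 2 : ℝ) : ℂ) := by
    have : ∀ k l, ⟪u k, b (u l)⟫_ℂ * ⟪w k, w l⟫_ℂ
        = (‖b‖ : ℂ) * (⟪u k, u l⟫_ℂ * ⟪w k, w l⟫_ℂ)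
          - ⟪u k, (adjoint c ∘L c) (u l)⟫_ℂ * ⟪w k, w l⟫_ℂ := by
      intro k l
      rw [happ (u l), inner_sub_right, inner_smul_right]
      ring
    rw [Finset.sum_congr rfl fun k _ => Finset.sum_congr rfl fun l _ => this k l]
    have expand : ∑ k ∈ t, ∑ l ∈ t,
        ((‖b‖ : ℂ) * (⟪u k, u l⟫_ℂ * ⟪w k, w l⟫_ℂ)
          - ⟪u k, (adjoint c ∘L c) (u l)⟫_ℂ * ⟪w k, w l⟫_ℂ)
        = (‖b‖ : ℂ) * (∑ k ∈ t, ∑ l ∈ t, ⟪u k, u l⟫_ℂ * ⟪w k, w l⟫_ℂ)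
          - ∑ k ∈ t, ∑ l ∈ t, ⟪u k, (adjoint c ∘L c) (u l)⟫_ℂ * ⟪w k, w l⟫_ℂ := by
      rw [Finset.mul_sum, ← Finset.sum_sub_distrib]
      exact Finset.sum_congr rfl fun k _ => by
        rw [Finset.mul_sum, ← Finset.sum_sub_distrib]
    rw [expand, ← tp_norm_sq tp htp, tp_csq_fst tp htp]
    norm_cast
  rw [key, Complex.ofReal_re]
  nlinarith [sq_nonneg ‖∑ k ∈ t, tp (c (u k)) (w k)‖]


/-- positivity of `Σ cᵢ•(aᵢ† ∘ aᵢ)` for `cᵢ = λᵢ > 0` -/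
lemma sum_adj_comp_nonneg {I : Type*} (s : Finset I)
    (a : I → HA →L[ℂ] HA) (lam : I → ℝ) (hlam : ∀ i, 0 < lam i) :
    (0 : HA →L[ℂ] HA) ≤ ∑ i ∈ s, (lam i : ℂ) • (adjoint (a i) ∘L a i) := by
  refine Finset.sum_nonneg fun i _ => ?_
  have : (lam i : ℂ) • (adjoint (a i) ∘L a i)
      = star ((Real.sqrt (lam i) : ℂ) • a i) * ((Real.sqrt (lam i) : ℂ) • a i) := by
    rw [star_smul, smul_mul_smul_comm, star_eq_adjoint, ← mul_def]
    congr 1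
    rw [Complex.star_def, Complex.conj_ofReal, ← Complex.ofReal_mul,
      Real.mul_self_sqrt (hlam i).le]
  rw [this]
  exact star_mul_self_nonneg _

lemma sum_comp_adj_nonneg {I : Type*} (s : Finset I)
    (a : I → HA →L[ℂ] HA) (lam : I → ℝ) (hlam : ∀ i, 0 < lam i) :
    (0 : HA →L[ℂ] HA) ≤ ∑ i ∈ s, ((lam i : ℂ))⁻¹ • (a i ∘L adjoint (a i)) := by
  refine Finset.sum_nonneg fun i _ => ?_
  have : ((lam i : ℂ))⁻¹ • (a i ∘L adjoint (a i))
      = star (((Real.sqrt (lam i) : ℂ))⁻¹ • adjoint (a i))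
          * (((Real.sqrt (lam i) : ℂ))⁻¹ • adjoint (a i)) := by
    rw [star_smul, smul_mul_smul_comm, star_eq_adjoint, adjoint_adjoint, ← mul_def]
    congr 1
    rw [star_inv₀, Complex.star_def, Complex.conj_ofReal, ← mul_inv,
      ← Complex.ofReal_mul, Real.mul_self_sqrt (hlam i).le]
  rw [this]
  exact star_mul_self_nonneg _

lemma P_bound {I : Type*} [DecidableEq I] (s : Finset I)
    (a : I → HA →L[ℂ] HA) (lam : I → ℝ) (hlam : ∀ i, 0 < lam i)
    (el : I → F →L[ℂ] F)
    (h1 : ∀ i j, adjoint (el i) ∘L el j = if i = j then 1 else 0)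
    {n : ℕ} (ξ : Fin n → HA) (η : Fin n → F) :
    ‖∑ p ∈ Finset.univ ×ˢ s,
        tp ((Real.sqrt (lam p.2) : ℂ) • a p.2 (ξ p.1)) (el p.2 (η p.1))‖
      ≤ Real.sqrt ‖∑ i ∈ s, (lam i : ℂ) • (adjoint (a i) ∘L a i)‖
        * ‖∑ k, tp (ξ k) (η k)‖ := by
  classical
  set SB : HA →L[ℂ] HA := ∑ i ∈ s, (lam i : ℂ) • (adjoint (a i) ∘L a i) with hSB
  set u : Fin n × I → HA := fun p => (Real.sqrt (lam p.2) : ℂ) • a p.2 (ξ p.1) with hu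
  set w : Fin n × I → F := fun p => el p.2 (η p.1) with hw
  set t : Finset (Fin n × I) := Finset.univ ×ˢ s with ht
  set Pv : L := ∑ p ∈ t, tp (u p) (w p) with hPv
  set v : L := ∑ k, tp (ξ k) (η k) with hv
  have innW : ∀ p q : Fin n × I,
      ⟪w p, w q⟫_ℂ = if p.2 = q.2 then ⟪η p.1, η q.1⟫_ℂ else 0 := by
    intro p q
    have hc := DFunLike.congr_fun (h1 p.2 q.2) (η q.1)
    rw [comp_apply] at hc
    rw [hw]
    simp only
    rw [← adjoint_inner_right, hc]
    split_ifs <;> simp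
  have innU : ∀ (i : I) (z y : HA),
      ⟪(Real.sqrt (lam i) : ℂ) • z, (Real.sqrt (lam i) : ℂ) • y⟫_ℂ
        = (lam i : ℂ) * ⟪z, y⟫_ℂ := by
    intro i z y
    rw [inner_smul_left, inner_smul_right, ← mul_assoc, Complex.conj_ofReal,
      ← Complex.ofReal_mul, Real.mul_self_sqrt (hlam i).le]
  have SBapply : ∀ z y : HA, ⟪z, SB y⟫_ℂ = ∑ i ∈ s, (lam i : ℂ) * ⟪a i z, a i y⟫_ℂ := by
    intro z y
    rw [hSB]
    rw [ContinuousLinearMap.sum_apply, inner_sum]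
    refine Finset.sum_congr rfl fun i _ => ?_
    rw [ContinuousLinearMap.smul_apply, inner_smul_right, comp_apply, adjoint_inner_right]
  have hsq : ((‖Pv‖ : ℂ)) ^ 2 = ∑ k, ∑ l, ⟪ξ k, SB (ξ l)⟫_ℂ * ⟪η k, η l⟫_ℂ := by
    rw [hPv, tp_norm_sq tp htp]
    calc ∑ p ∈ t, ∑ q ∈ t, ⟪u p, u q⟫_ℂ * ⟪w p, w q⟫_ℂ
        = ∑ p ∈ t, ∑ l, ⟪u p, u (l, p.2)⟫_ℂ * ⟪η p.1, η l⟫_ℂ := by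
          refine Finset.sum_congr rfl fun p hp => ?_
          have hp2 : p.2 ∈ s := (Finset.mem_product.1 hp).2
          rw [ht, Finset.sum_product]
          refine Finset.sum_congr rfl fun l _ => ?_
          calc ∑ j ∈ s, ⟪u p, u (l, j)⟫_ℂ * ⟪w p, w (l, j)⟫_ℂ
              = ∑ j ∈ s, if p.2 = j then ⟪u p, u (l, j)⟫_ℂ * ⟪η p.1, η l⟫_ℂ else 0 := by
                refine Finset.sum_congr rfl fun j _ => ?_
                rw [innW p (l, j)]
                split_ifs <;> simp
            _ = ⟪u p, u (l, p.2)⟫_ℂ * ⟪η p.1, η l⟫_ℂ := by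
                rw [Finset.sum_ite_eq]
                simp [hp2]
      _ = ∑ k, ∑ l, ⟪ξ k, SB (ξ l)⟫_ℂ * ⟪η k, η l⟫_ℂ := by
          rw [ht, Finset.sum_product]
          refine Finset.sum_congr rfl fun k _ => ?_
          rw [Finset.sum_comm]
          refine Finset.sum_congr rfl fun l _ => ?_
          rw [SBapply, Finset.sum_mul]
          refine Finset.sum_congr rfl fun i _ => ?_
          simp only [hu]
          rw [innU i]
  have hre : ‖Pv‖ ^ 2 ≤ ‖SB‖ * ‖v‖ ^ 2 := by
    have h1' : (((‖Pv‖ : ℂ)) ^ 2).re = ‖Pv‖ ^ 2 := by norm_cast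
    rw [← h1', hsq]
    exact tp_gram_le tp htp Finset.univ ξ η SB
      (sum_adj_comp_nonneg tp htp s a lam hlam)
  have h2' := Real.sqrt_le_sqrt hre
  rw [Real.sqrt_sq (norm_nonneg _), Real.sqrt_mul (norm_nonneg _),
    Real.sqrt_sq (norm_nonneg _)] at h2'
  exact h2'

lemma Q_bound {I : Type*} [DecidableEq I] (s : Finset I)
    (a : I → HA →L[ℂ] HA) (lam : I → ℝ) (hlam : ∀ i, 0 < lam i)
    (el' : I → F →L[ℂ] F)
    (h2 : ∀ i j, adjoint (el' i) ∘L el' j = if i = j then 1 else 0)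
    {n : ℕ} (ξ : Fin n → HA) (η : Fin n → F) :
    ‖∑ p ∈ Finset.univ ×ˢ s,
        tp (((Real.sqrt (lam p.2) : ℂ))⁻¹ • a p.2 (ξ p.1)) (adjoint (el' p.2) (η p.1))‖
      ≤ Real.sqrt ‖∑ i ∈ s, ((lam i : ℂ))⁻¹ • (a i ∘L adjoint (a i))‖
        * ‖∑ k, tp (ξ k) (η k)‖ := by
  classical
  set SB' : HA →L[ℂ] HA := ∑ i ∈ s, ((lam i : ℂ))⁻¹ • (a i ∘L adjoint (a i)) with hSB'
  set u : Fin n × I → HA := fun p => ((Real.sqrt (lam p.2) : ℂ))⁻¹ • a p.2 (ξ p.1) with hu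
  set w : Fin n × I → F := fun p => adjoint (el' p.2) (η p.1) with hw
  set t : Finset (Fin n × I) := Finset.univ ×ˢ s with ht
  set Qv : L := ∑ p ∈ t, tp (u p) (w p) with hQv
  set v : L := ∑ k, tp (ξ k) (η k) with hv
  set z : I → L := fun j => ∑ k, tp (ξ k) (adjoint (el' j) (η k)) with hz
  set wv : I → L := fun j => ∑ p ∈ t, tp (adjoint (a j) (u p)) (w p) with hwv
  have hSB'nonneg : (0 : HA →L[ℂ] HA) ≤ SB' := sum_comp_adj_nonneg tp htp s a lam hlam
  -- Step Q1 : ⟪Qv, Qv⟫ = ∑ j ∈ s, (√λⱼ)⁻¹ ⟪wv j, z j⟫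
  have Q1 : ⟪Qv, Qv⟫_ℂ
      = ∑ j ∈ s, ((Real.sqrt (lam j) : ℂ))⁻¹ * ⟪wv j, z j⟫_ℂ := by
    rw [hQv, tp_inner_sum tp htp]
    calc ∑ p ∈ t, ∑ q ∈ t, ⟪u p, u q⟫_ℂ * ⟪w p, w q⟫_ℂ
        = ∑ p ∈ t, ∑ j ∈ s, ∑ l, ((Real.sqrt (lam j) : ℂ))⁻¹
            * (⟪adjoint (a j) (u p), ξ l⟫_ℂ * ⟪w p, w (l, j)⟫_ℂ) := by
          refine Finset.sum_congr rfl fun p _ => ?_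
          rw [ht, Finset.sum_product, Finset.sum_comm]
          refine Finset.sum_congr rfl fun j _ => Finset.sum_congr rfl fun l _ => ?_
          have hulj : u (l, j) = ((Real.sqrt (lam j) : ℂ))⁻¹ • a j (ξ l) := rfl
          rw [hulj, inner_smul_right, ← adjoint_inner_left]
          ring
      _ = ∑ j ∈ s, ((Real.sqrt (lam j) : ℂ))⁻¹ * ⟪wv j, z j⟫_ℂ := by
          rw [Finset.sum_comm]
          refine Finset.sum_congr rfl fun j _ => ?_
          rw [hwv, hz]
          simp only
          rw [tp_inner_sum tp htp, Finset.mul_sum]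
          refine Finset.sum_congr rfl fun p _ => ?_
          rw [Finset.mul_sum]
  -- Step Q2 : ‖Qv‖² ≤ ∑ j ∈ s, (√λⱼ)⁻¹ ‖wv j‖ ‖z j‖
  have Q2 : ‖Qv‖ ^ 2
      ≤ ∑ j ∈ s, ((Real.sqrt (lam j))⁻¹ * ‖wv j‖) * ‖z j‖ := by
    have habs : ‖Qv‖ ^ 2 = ‖(⟪Qv, Qv⟫_ℂ)‖ := by
      rw [inner_self_eq_norm_sq_to_K (𝕜 := ℂ)]
      rw [norm_pow, RCLike.norm_ofReal, abs_norm]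
    rw [habs, Q1]
    refine (norm_sum_le _ _).trans ?_
    refine Finset.sum_le_sum fun j _ => ?_
    rw [norm_mul, norm_inv]
    have hnrm : ‖((Real.sqrt (lam j) : ℂ))‖ = Real.sqrt (lam j) := by
      rw [Complex.norm_real, Real.norm_eq_abs, abs_of_nonneg (Real.sqrt_nonneg _)]
    rw [hnrm, mul_assoc]
    refine mul_le_mul_of_nonneg_left ?_ (by positivity)
    exact norm_inner_le_norm _ _
  -- Step Q3 : Cauchy-Schwarz
  have Q3 : ∑ j ∈ s, ((Real.sqrt (lam j))⁻¹ * ‖wv j‖) * ‖z j‖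
      ≤ Real.sqrt (∑ j ∈ s, ((lam j)⁻¹ * ‖wv j‖ ^ 2))
        * Real.sqrt (∑ j ∈ s, ‖z j‖ ^ 2) := by
    have := Real.sum_mul_le_sqrt_mul_sqrt s
      (fun j => (Real.sqrt (lam j))⁻¹ * ‖wv j‖) (fun j => ‖z j‖)
    have heq : ∀ j ∈ s, ((Real.sqrt (lam j))⁻¹ * ‖wv j‖) ^ 2
        = (lam j)⁻¹ * ‖wv j‖ ^ 2 := by
      intro j _
      rw [mul_pow, inv_pow, Real.sq_sqrt (hlam j).le]
    rwa [Finset.sum_congr rfl heq] at this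
  -- Step Q4 : ∑ λⱼ⁻¹ ‖wv j‖² ≤ ‖SB'‖ ‖Qv‖²
  have Q4 : ∑ j ∈ s, ((lam j)⁻¹ * ‖wv j‖ ^ 2) ≤ ‖SB'‖ * ‖Qv‖ ^ 2 := by
    have hSB'apply : ∀ zz y : HA, ⟪zz, SB' y⟫_ℂ
        = ∑ j ∈ s, ((lam j : ℂ))⁻¹ * ⟪adjoint (a j) zz, adjoint (a j) y⟫_ℂ := by
      intro zz y
      rw [hSB', ContinuousLinearMap.sum_apply, inner_sum]
      refine Finset.sum_congr rfl fun j _ => ?_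
      rw [ContinuousLinearMap.smul_apply, inner_smul_right, comp_apply,
        adjoint_inner_left]
    have hkey : ∑ p ∈ t, ∑ q ∈ t, ⟪u p, SB' (u q)⟫_ℂ * ⟪w p, w q⟫_ℂ
        = ∑ j ∈ s, ((lam j : ℂ))⁻¹ * ((‖wv j‖ : ℂ)) ^ 2 := by
      calc ∑ p ∈ t, ∑ q ∈ t, ⟪u p, SB' (u q)⟫_ℂ * ⟪w p, w q⟫_ℂ
          = ∑ p ∈ t, ∑ j ∈ s, ∑ q ∈ t, ((lam j : ℂ))⁻¹
              * (⟪adjoint (a j) (u p), adjoint (a j) (u q)⟫_ℂ * ⟪w p, w q⟫_ℂ) := by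
            refine Finset.sum_congr rfl fun p _ => ?_
            rw [Finset.sum_comm]
            refine Finset.sum_congr rfl fun q _ => ?_
            rw [hSB'apply, Finset.sum_mul]
            refine Finset.sum_congr rfl fun j _ => ?_
            ring
        _ = ∑ j ∈ s, ((lam j : ℂ))⁻¹ * ((‖wv j‖ : ℂ)) ^ 2 := by
            rw [Finset.sum_comm]
            refine Finset.sum_congr rfl fun j _ => ?_
            rw [hwv]
            simp only
            rw [tp_norm_sq tp htp, Finset.mul_sum]
            refine Finset.sum_congr rfl fun p _ => ?_
            rw [Finset.mul_sum]
    have hre : (∑ p ∈ t, ∑ q ∈ t, ⟪u p, SB' (u q)⟫_ℂ * ⟪w p, w q⟫_ℂ).re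
        = ∑ j ∈ s, ((lam j)⁻¹ * ‖wv j‖ ^ 2) := by
      rw [hkey, Complex.re_sum]
      refine Finset.sum_congr rfl fun j _ => ?_
      norm_cast
    have := tp_gram_le tp htp t u w SB' hSB'nonneg
    rw [hre] at this
    exact this
  -- Step Q5 : ∑ ‖z j‖² ≤ ‖v‖²
  have Q5 : ∑ j ∈ s, ‖z j‖ ^ 2 ≤ ‖v‖ ^ 2 := by
    set E : F →L[ℂ] F := ∑ j ∈ s, el' j ∘L adjoint (el' j) with hE
    have hEsa : star E = E := by
      rw [hE, star_sum]
      refine Finset.sum_congr rfl fun j _ => ?_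
      rw [← mul_def, star_mul, star_eq_adjoint, star_eq_adjoint, adjoint_adjoint, mul_def]
    have hEE : E * E = E := by
      rw [hE, Finset.sum_mul_sum]
      refine Finset.sum_congr rfl fun j hj => ?_
      calc ∑ j' ∈ s, (el' j ∘L adjoint (el' j)) * (el' j' ∘L adjoint (el' j'))
          = ∑ j' ∈ s, if j = j' then el' j ∘L adjoint (el' j) else 0 := by
            refine Finset.sum_congr rfl fun j' _ => ?_
            rw [← mul_def, ← mul_def, mul_assoc, ← mul_assoc (adjoint (el' j)),
              mul_def (adjoint (el' j)) (el' j'), h2 j j']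
            split_ifs with h
            · subst h
              rw [one_mul, mul_def]
            · rw [zero_mul, mul_zero]
        _ = el' j ∘L adjoint (el' j) := by
            rw [Finset.sum_ite_eq]
            simp [hj]
    have hE2 : adjoint (1 - E) ∘L (1 - E) = 1 - E := by
      have hsa : adjoint (1 - E) = 1 - E := by
        rw [← star_eq_adjoint, star_sub, star_one, hEsa]
      rw [hsa, ← mul_def, mul_sub, sub_mul, sub_mul, hEE]
      simp only [mul_one, one_mul]
      abel
    have hzsq : ∀ j, ((‖z j‖ : ℂ)) ^ 2
        = ∑ k, ∑ l, ⟪ξ k, ξ l⟫_ℂ * ⟪η k, (el' j ∘L adjoint (el' j)) (η l)⟫_ℂ := by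
      intro j
      rw [hz]
      simp only
      rw [tp_norm_sq tp htp]
      refine Finset.sum_congr rfl fun k _ => Finset.sum_congr rfl fun l _ => ?_
      rw [comp_apply, adjoint_inner_left]
    have hEsum : ∑ j ∈ s, ((‖z j‖ : ℂ)) ^ 2
        = ∑ k, ∑ l, ⟪ξ k, ξ l⟫_ℂ * ⟪η k, E (η l)⟫_ℂ := by
      rw [Finset.sum_congr rfl fun j _ => hzsq j, Finset.sum_comm]
      refine Finset.sum_congr rfl fun k _ => ?_
      rw [Finset.sum_comm]
      refine Finset.sum_congr rfl fun l _ => ?_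
      rw [hE, ContinuousLinearMap.sum_apply, inner_sum, Finset.mul_sum]
    have hfinal : ((‖v‖ : ℂ)) ^ 2 - ∑ j ∈ s, ((‖z j‖ : ℂ)) ^ 2
        = ((‖∑ k, tp (ξ k) ((1 - E) (η k))‖ : ℂ)) ^ 2 := by
      rw [hEsum, hv, tp_norm_sq tp htp, ← tp_csq_snd tp htp, ← Finset.sum_sub_distrib]
      refine Finset.sum_congr rfl fun k _ => ?_
      rw [← Finset.sum_sub_distrib]
      refine Finset.sum_congr rfl fun l _ => ?_
      rw [hE2, ContinuousLinearMap.sub_apply, inner_sub_right]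
      simp only [ContinuousLinearMap.one_apply]
      ring
    have hre := congrArg Complex.re hfinal
    rw [Complex.sub_re, Complex.re_sum] at hre
    have h1 : ((((‖v‖ : ℂ)) ^ 2).re) = ‖v‖ ^ 2 := by norm_cast
    have h2' : ∀ j ∈ s, ((((‖z j‖ : ℂ)) ^ 2).re) = ‖z j‖ ^ 2 := fun j _ => by norm_cast
    have h3 : ((((‖∑ k, tp (ξ k) ((1 - E) (η k))‖ : ℂ)) ^ 2).re)
        = ‖∑ k, tp (ξ k) ((1 - E) (η k))‖ ^ 2 := by norm_cast
    rw [h1, h3, Finset.sum_congr rfl h2'] at hre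
    nlinarith [sq_nonneg ‖∑ k, tp (ξ k) ((1 - E) (η k))‖]
  -- assemble
  have hQle : ‖Qv‖ ^ 2 ≤ (Real.sqrt ‖SB'‖ * ‖v‖) * ‖Qv‖ := by
    have c1 := Q2.trans (Q3.trans (mul_le_mul (Real.sqrt_le_sqrt Q4)
      (Real.sqrt_le_sqrt Q5) (Real.sqrt_nonneg _) (Real.sqrt_nonneg _)))
    rw [Real.sqrt_mul (norm_nonneg _), Real.sqrt_sq (norm_nonneg _),
      Real.sqrt_sq (norm_nonneg _)] at c1
    calc ‖Qv‖ ^ 2 ≤ (Real.sqrt ‖SB'‖ * ‖Qv‖) * ‖v‖ := c1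
      _ = (Real.sqrt ‖SB'‖ * ‖v‖) * ‖Qv‖ := by ring
  rcases eq_or_lt_of_le (norm_nonneg Qv) with h0 | h0
  · rw [← h0]
    positivity
  · have hsq' : ‖Qv‖ * ‖Qv‖ ≤ (Real.sqrt ‖SB'‖ * ‖v‖) * ‖Qv‖ := by
      rwa [pow_two] at hQle
    exact (mul_le_mul_iff_of_pos_right h0).1 hsq'

end aux

section main
open ContinuousLinearMap
variable {HA F L : Type*}
    [NormedAddCommGroup HA] [InnerProductSpace ℂ HA] [CompleteSpace HA]
    [NormedAddCommGroup F] [InnerProductSpace ℂ F] [CompleteSpace F]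
    [NormedAddCommGroup L] [InnerProductSpace ℂ L] [CompleteSpace L]

theorem norm_sum_tensor_generalized_circular_le'
    {I : Type*} [DecidableEq I] (s : Finset I)
    (a : I → HA →L[ℂ] HA) (lam : I → ℝ) (hlam : ∀ i, 0 < lam i)
    (el el' : I → F →L[ℂ] F)
    (h1 : ∀ i j, (ContinuousLinearMap.adjoint (el i)) ∘L (el j)
        = if i = j then 1 else 0)
    (h2 : ∀ i j, (ContinuousLinearMap.adjoint (el' i)) ∘L (el' j)
        = if i = j then 1 else 0)
    (h3 : ∀ i j, (ContinuousLinearMap.adjoint (el i)) ∘L (el' j) = 0)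
    (x : I → F →L[ℂ] F)
    (hx : ∀ i, x i = (Real.sqrt (lam i) : ℂ) • el i +
        ((Real.sqrt (lam i) : ℂ))⁻¹ • ContinuousLinearMap.adjoint (el' i))
    (tp : HA →ₗ[ℂ] F →ₗ[ℂ] L)
    (htp : ∀ (ξ ξ' : HA) (η η' : F),
      ⟪tp ξ η, tp ξ' η'⟫_ℂ = ⟪ξ, ξ'⟫_ℂ * ⟪η, η'⟫_ℂ)
    (hdense : (Submodule.span ℂ
        (Set.range fun p : HA × F => tp p.1 p.2)).topologicalClosure = ⊤)
    (V : L →L[ℂ] L)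
    (hV : ∀ (ξ : HA) (η : F), V (tp ξ η) = ∑ i ∈ s, tp (a i ξ) (x i η)) :
    ‖V‖ ≤
      Real.sqrt ‖∑ i ∈ s, (lam i : ℂ) •
          ((ContinuousLinearMap.adjoint (a i)) ∘L (a i))‖ +
      Real.sqrt ‖∑ i ∈ s, ((lam i : ℂ))⁻¹ •
          ((a i) ∘L (ContinuousLinearMap.adjoint (a i)))‖ := by
  classical
  set C : ℝ := Real.sqrt ‖∑ i ∈ s, (lam i : ℂ) • (adjoint (a i) ∘L a i)‖
      + Real.sqrt ‖∑ i ∈ s, ((lam i : ℂ))⁻¹ • (a i ∘L adjoint (a i))‖ with hC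
  have hC0 : 0 ≤ C := by positivity
  -- the bound on finite combinations
  have key : ∀ (n : ℕ) (ξ : Fin n → HA) (η : Fin n → F),
      ‖V (∑ k, tp (ξ k) (η k))‖ ≤ C * ‖∑ k, tp (ξ k) (η k)‖ := by
    intro n ξ η
    have hsplit : V (∑ k, tp (ξ k) (η k))
        = (∑ p ∈ Finset.univ ×ˢ s,
            tp ((Real.sqrt (lam p.2) : ℂ) • a p.2 (ξ p.1)) (el p.2 (η p.1)))
          + (∑ p ∈ Finset.univ ×ˢ s,
            tp (((Real.sqrt (lam p.2) : ℂ))⁻¹ • a p.2 (ξ p.1))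
              (adjoint (el' p.2) (η p.1))) := by
      rw [map_sum, Finset.sum_product, Finset.sum_product, ← Finset.sum_add_distrib]
      refine Finset.sum_congr rfl fun k _ => ?_
      rw [hV, ← Finset.sum_add_distrib]
      refine Finset.sum_congr rfl fun i _ => ?_
      simp only [hx i, ContinuousLinearMap.add_apply, ContinuousLinearMap.smul_apply,
        map_add, map_smul, LinearMap.smul_apply]
    rw [hsplit]
    refine (norm_add_le _ _).trans ?_
    have hP := P_bound tp htp s a lam hlam el h1 ξ η
    have hQ := Q_bound tp htp s a lam hlam el' h2 ξ η
    rw [hC, add_mul]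
    exact add_le_add hP hQ
  -- representation of span elements
  have hrep : ∀ v ∈ Submodule.span ℂ (Set.range fun p : HA × F => tp p.1 p.2),
      ∃ (n : ℕ) (ξ : Fin n → HA) (η : Fin n → F), v = ∑ k, tp (ξ k) (η k) := by
    intro v hv
    induction hv using Submodule.span_induction with
    | mem y hy =>
        obtain ⟨p, rfl⟩ := hy
        exact ⟨1, fun _ => p.1, fun _ => p.2, by simp⟩
    | zero => exact ⟨0, Fin.elim0, Fin.elim0, by simp⟩
    | add y z _ _ hy hz =>
        obtain ⟨n1, ξ1, η1, rfl⟩ := hy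
        obtain ⟨n2, ξ2, η2, rfl⟩ := hz
        refine ⟨n1 + n2, Fin.append ξ1 ξ2, Fin.append η1 η2, ?_⟩
        rw [Fin.sum_univ_add]
        congr 1
        · exact Finset.sum_congr rfl fun k _ => by
            rw [Fin.append_left, Fin.append_left]
        · exact Finset.sum_congr rfl fun k _ => by
            rw [Fin.append_right, Fin.append_right]
    | smul c y _ hy =>
        obtain ⟨n1, ξ1, η1, rfl⟩ := hy
        refine ⟨n1, fun k => c • ξ1 k, η1, ?_⟩
        rw [Finset.smul_sum]
        exact Finset.sum_congr rfl fun k _ => by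
          rw [map_smul, LinearMap.smul_apply]
  -- conclude by density
  refine V.opNorm_le_bound hC0 fun v => ?_
  have hsub : ((Submodule.span ℂ (Set.range fun p : HA × F => tp p.1 p.2) : Submodule ℂ L) : Set L)
      ⊆ {w : L | ‖V w‖ ≤ C * ‖w‖} := by
    intro w hw
    obtain ⟨n, ξ, η, rfl⟩ := hrep w hw
    exact key n ξ η
  have hclosed : IsClosed {w : L | ‖V w‖ ≤ C * ‖w‖} :=
    isClosed_le (V.continuous.norm) (continuous_const.mul continuous_norm)
  have huniv : closure ((Submodule.span ℂ
      (Set.range fun p : HA × F => tp p.1 p.2) : Submodule ℂ L) : Set L) = Set.univ := by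
    have h := congrArg (fun (p : Submodule ℂ L) => (p : Set L)) hdense
    simpa using h
  have hvmem : v ∈ closure ((Submodule.span ℂ
      (Set.range fun p : HA × F => tp p.1 p.2) : Submodule ℂ L) : Set L) := by
    rw [huniv]; trivial
  have := closure_mono hsub hvmem
  rwa [hclosed.closure_eq] at this

end main


/-- Let `A ⊆ B(H_A)` be a C*-algebra of operators, `(aᵢ)` a finite family in `A`, and
`xᵢ = λᵢ^{1/2} ℓᵢ + λᵢ^{-1/2} ℓ′ᵢ*` the generalized circular elements built from the
left creation operators `ℓᵢ = ℓ(eᵢ)`, `ℓ′ᵢ = ℓ(e′ᵢ)` of an orthonormal system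
`{eᵢ} ∪ {e′ᵢ}` on the full Fock space `F(H)` (axiomatized by the creation relations
`ℓ(u)* ℓ(v) = ⟨v, u⟩ 1`).  The Hilbert-space tensor product `H_A ⊗₂ F(H)` is
axiomatized by a bilinear map `tp` with `⟪tp ξ η, tp ξ' η'⟫ = ⟪ξ, ξ'⟫⟪η, η'⟫` and dense
span.  Then `‖Σᵢ aᵢ ⊗ xᵢ‖ ≤ ‖Σᵢ λᵢ aᵢ* aᵢ‖^{1/2} + ‖Σᵢ λᵢ⁻¹ aᵢ aᵢ*‖^{1/2}`. -/
theorem norm_sum_tensor_generalized_circular_le {HA F L : Type*}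
    [NormedAddCommGroup HA] [InnerProductSpace ℂ HA] [CompleteSpace HA]
    [NormedAddCommGroup F] [InnerProductSpace ℂ F] [CompleteSpace F]
    [NormedAddCommGroup L] [InnerProductSpace ℂ L] [CompleteSpace L]
    {I : Type*} [DecidableEq I] (s : Finset I)
    (a : I → HA →L[ℂ] HA) (lam : I → ℝ) (hlam : ∀ i, 0 < lam i)
    -- left creation operators for the orthonormal system {eᵢ} ∪ {e′ᵢ}:
    (el el' : I → F →L[ℂ] F)
    (h1 : ∀ i j, (ContinuousLinearMap.adjoint (el i)) ∘L (el j)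
        = if i = j then 1 else 0)
    (h2 : ∀ i j, (ContinuousLinearMap.adjoint (el' i)) ∘L (el' j)
        = if i = j then 1 else 0)
    (h3 : ∀ i j, (ContinuousLinearMap.adjoint (el i)) ∘L (el' j) = 0)
    -- the generalized circular elements xᵢ = λᵢ^{1/2} ℓᵢ + λᵢ^{-1/2} ℓ′ᵢ*:
    (x : I → F →L[ℂ] F)
    (hx : ∀ i, x i = (Real.sqrt (lam i) : ℂ) • el i +
        ((Real.sqrt (lam i) : ℂ))⁻¹ • ContinuousLinearMap.adjoint (el' i))
    -- the tensor product H_A ⊗₂ F(H):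
    (tp : HA →ₗ[ℂ] F →ₗ[ℂ] L)
    (htp : ∀ (ξ ξ' : HA) (η η' : F),
      ⟪tp ξ η, tp ξ' η'⟫_ℂ = ⟪ξ, ξ'⟫_ℂ * ⟪η, η'⟫_ℂ)
    (hdense : (Submodule.span ℂ
        (Set.range fun p : HA × F => tp p.1 p.2)).topologicalClosure = ⊤)
    -- the operator Σᵢ aᵢ ⊗ xᵢ:
    (V : L →L[ℂ] L)
    (hV : ∀ (ξ : HA) (η : F), V (tp ξ η) = ∑ i ∈ s, tp (a i ξ) (x i η)) :
    ‖V‖ ≤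
      Real.sqrt ‖∑ i ∈ s, (lam i : ℂ) •
          ((ContinuousLinearMap.adjoint (a i)) ∘L (a i))‖ +
      Real.sqrt ‖∑ i ∈ s, ((lam i : ℂ))⁻¹ •
          ((a i) ∘L (ContinuousLinearMap.adjoint (a i)))‖ := by
  exact norm_sum_tensor_generalized_circular_le' s a lam hlam el el' h1 h2 h3 x hx
    tp htp hdense V hV
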